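/- Let m ≥ 2, 1 ≤ k ≤ m − 1, and let h, h' : Fin m → ℤ be neighboring in the sense that either h i ≤ h' i ≤ h i + 1 for every i, or h' i ≤ h i ≤ h' i + 1 for every i. If the gap q_k(h) = h_(k) − h_(k+1) satisfies q_k(h) > 1, then the top-k index set is stable: the set {i : h i ≥ h_(k)} equals the set {i : h' i ≥ h'_(k)}, and this set has exactly k elements. (Equivalently, the local sensitivity of releasing the unordered top-k index set is 0 whenever q_k(h) > 1.) -/

import Mathlib

/-- `kthLargest h k` is the `k`-th largest entry of `h` (0-indexed: `k = 0` is the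
largest). -/
def kthLargest {m : ℕ} (h : Fin m → ℤ) (k : Fin m) : ℤ :=
  h (Tuple.sort h k.rev)

/-- `kth h k _ _` is the `k`-th largest entry of `h`, 1-indexed (`1 ≤ k ≤ m`). -/
def kth {m : ℕ} (h : Fin m → ℤ) (k : ℕ) (h1 : 1 ≤ k) (h2 : k ≤ m) : ℤ :=
  kthLargest h ⟨k - 1, by omega⟩

lemma kth_ge_iff {m : ℕ} (h : Fin m → ℤ) (k : ℕ) (h1 : 1 ≤ k) (h2 : k ≤ m) (t : ℤ) :
    t ≤ kth h k h1 h2 ↔ k ≤ (Finset.univ.filter fun i => t ≤ h i).card := by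
  have hm : 0 < m := by omega
  set σ := Tuple.sort h with hσ
  set g : Fin m → ℤ := h ∘ σ with hg
  have hmono : Monotone g := Tuple.monotone_sort h
  have hcard : (Finset.univ.filter fun i => t ≤ h i).card
      = (Finset.univ.filter fun j => t ≤ g j).card := by
    refine (Finset.card_bij (fun j _ => σ j) ?_ ?_ ?_).symm
    · intro j hj
      simp only [Finset.mem_filter, Finset.mem_univ, true_and, hg, Function.comp] at hj ⊢
      exact hj
    · intro a _ b _ hab
      exact σ.injective hab
    · intro i hi
      refine ⟨σ.symm i, ?_, by simp⟩
      simp only [Finset.mem_filter, Finset.mem_univ, true_and, hg, Function.comp] at *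
      simpa using hi
  have hkth : kth h k h1 h2 = g ⟨m - k, by omega⟩ := by
    have : (Fin.rev ⟨k - 1, by omega⟩ : Fin m) = ⟨m - k, by omega⟩ := by
      ext; simp [Fin.rev]; omega
    simp [kth, kthLargest, this, hg, hσ]
  rw [hkth, hcard]
  constructor
  · intro ht
    have hsub : (Finset.univ.filter fun j : Fin m => (⟨m - k, by omega⟩ : Fin m) ≤ j)
        ⊆ Finset.univ.filter fun j => t ≤ g j := by
      intro j hj
      simp only [Finset.mem_filter, Finset.mem_univ, true_and] at *
      exact le_trans ht (hmono hj)
    have hc : (Finset.univ.filter fun j : Fin m => (⟨m - k, by omega⟩ : Fin m) ≤ j).card = k := by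
      have : (Finset.univ.filter fun j : Fin m => (⟨m - k, by omega⟩ : Fin m) ≤ j)
          = Finset.Ici (⟨m - k, by omega⟩ : Fin m) := by
        ext j; simp
      rw [this]
      simp only [Fin.card_Ici, Fin.val_mk]
      omega
    calc k = _ := hc.symm
      _ ≤ _ := Finset.card_le_card hsub
  · intro hc
    by_contra hlt
    push_neg at hlt
    have hsub : (Finset.univ.filter fun j => t ≤ g j)
        ⊆ Finset.univ.filter fun j : Fin m => (⟨m - k, by omega⟩ : Fin m) < j := by
      intro j hj
      simp only [Finset.mem_filter, Finset.mem_univ, true_and] at *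
      by_contra hle
      push_neg at hle
      exact absurd (le_trans hj (hmono hle)) (not_le.mpr hlt)
    have hc2 : (Finset.univ.filter fun j : Fin m => (⟨m - k, by omega⟩ : Fin m) < j).card = k - 1 := by
      have : (Finset.univ.filter fun j : Fin m => (⟨m - k, by omega⟩ : Fin m) < j)
          = Finset.Ioi (⟨m - k, by omega⟩ : Fin m) := by
        ext j; simp
      rw [this]
      simp only [Fin.card_Ioi, Fin.val_mk]
      omega
    have := Finset.card_le_card hsub
    omega
theorem topk_stable_of_large_gap {m : ℕ} (hm : 2 ≤ m) (k : ℕ)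
    (hk1 : 1 ≤ k) (hk2 : k ≤ m - 1) (h h' : Fin m → ℤ)
    (hnb : (∀ i, h i ≤ h' i ∧ h' i ≤ h i + 1) ∨ (∀ i, h' i ≤ h i ∧ h i ≤ h' i + 1))
    (hgap : kth h k hk1 (by omega) - kth h (k + 1) (by omega) (by omega) > 1) :
    Finset.univ.filter (fun i => kth h k hk1 (by omega) ≤ h i) =
      Finset.univ.filter (fun i => kth h' k hk1 (by omega) ≤ h' i) ∧
    (Finset.univ.filter (fun i => kth h k hk1 (by omega) ≤ h i)).card = k := by
  have hkm : k ≤ m := by omega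
  have hk1m : k + 1 ≤ m := by omega
  set T := kth h k hk1 hkm with hT
  set B := kth h (k + 1) (by omega) hk1m with hB
  set T' := kth h' k hk1 hkm with hT'
  set B' := kth h' (k + 1) (by omega) hk1m with hB'
  have hBT : B ≤ T - 2 := by omega
  -- card of top set of h equals k
  have hcardT : (Finset.univ.filter fun i => T ≤ h i).card = k := by
    have h1 : k ≤ (Finset.univ.filter fun i => T ≤ h i).card :=
      (kth_ge_iff h k hk1 hkm T).mp le_rfl
    have h2 : ¬ k + 1 ≤ (Finset.univ.filter fun i => T ≤ h i).card := by
      intro hc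
      have := (kth_ge_iff h (k + 1) (by omega) hk1m T).mpr hc
      omega
    omega
  -- pointwise bounds valid in both cases
  have hlow : ∀ i, h i - 1 ≤ h' i := by
    rcases hnb with hc | hc <;> intro i <;> have := hc i <;> omega
  have hup : ∀ i, h' i - 1 ≤ h i := by
    rcases hnb with hc | hc <;> intro i <;> have := hc i <;> omega
  -- T - 1 ≤ T'
  have hTT' : T - 1 ≤ T' := by
    apply (kth_ge_iff h' k hk1 hkm (T - 1)).mpr
    refine le_trans hcardT.ge (Finset.card_le_card ?_)
    intro i hi
    simp only [Finset.mem_filter, Finset.mem_univ, true_and] at *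
    have := hlow i; omega
  -- B' < T', by cases
  have hB'T' : B' < T' := by
    rcases hnb with hc | hc
    · -- h ≤ h' ≤ h + 1 : T ≤ T' and B' ≤ B + 1
      have hT'ge : T ≤ T' := by
        apply (kth_ge_iff h' k hk1 hkm T).mpr
        refine le_trans hcardT.ge (Finset.card_le_card ?_)
        intro i hi
        simp only [Finset.mem_filter, Finset.mem_univ, true_and] at *
        have := (hc i).1; omega
      have hB'le : B' ≤ B + 1 := by
        by_contra hlt
        push_neg at hlt
        have h1 : k + 1 ≤ (Finset.univ.filter fun i => B + 2 ≤ h' i).card :=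
          (kth_ge_iff h' (k + 1) (by omega) hk1m (B + 2)).mp (by omega)
        have h2 : (Finset.univ.filter fun i => B + 2 ≤ h' i).card
            ≤ (Finset.univ.filter fun i => B + 1 ≤ h i).card := by
          apply Finset.card_le_card
          intro i hi
          simp only [Finset.mem_filter, Finset.mem_univ, true_and] at *
          have := (hc i).2; omega
        have := (kth_ge_iff h (k + 1) (by omega) hk1m (B + 1)).mpr (by omega)
        omega
      omega
    · -- h' ≤ h ≤ h' + 1 : B' ≤ B
      have hB'le : B' ≤ B := by
        have h1 : k + 1 ≤ (Finset.univ.filter fun i => B' ≤ h' i).card :=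
          (kth_ge_iff h' (k + 1) (by omega) hk1m B').mp le_rfl
        have h2 : (Finset.univ.filter fun i => B' ≤ h' i).card
            ≤ (Finset.univ.filter fun i => B' ≤ h i).card := by
          apply Finset.card_le_card
          intro i hi
          simp only [Finset.mem_filter, Finset.mem_univ, true_and] at *
          have := (hc i).1; omega
        have := (kth_ge_iff h (k + 1) (by omega) hk1m B').mpr (by omega)
        omega
      omega
  -- card of top set of h' equals k
  have hcardT' : (Finset.univ.filter fun i => T' ≤ h' i).card = k := by
    have h1 : k ≤ (Finset.univ.filter fun i => T' ≤ h' i).card :=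
      (kth_ge_iff h' k hk1 hkm T').mp le_rfl
    have h2 : ¬ k + 1 ≤ (Finset.univ.filter fun i => T' ≤ h' i).card := by
      intro hc
      have := (kth_ge_iff h' (k + 1) (by omega) hk1m T').mpr hc
      omega
    omega
  -- key pointwise fact: T' ≤ h' i → T - 1 ≤ h i
  have hmid : ∀ i, T' ≤ h' i → T - 1 ≤ h i := by
    rcases hnb with hc | hc <;> intro i hi
    · have hT'ge : T ≤ T' := by
        apply (kth_ge_iff h' k hk1 hkm T).mpr
        refine le_trans hcardT.ge (Finset.card_le_card ?_)
        intro i hi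
        simp only [Finset.mem_filter, Finset.mem_univ, true_and] at *
        have := (hc i).1; omega
      have := (hc i).2; omega
    · have := (hc i).1; omega
  -- inclusion
  have hsub : (Finset.univ.filter fun i => T' ≤ h' i)
      ⊆ Finset.univ.filter fun i => T ≤ h i := by
    intro i hi
    simp only [Finset.mem_filter, Finset.mem_univ, true_and] at *
    have hi1 : T - 1 ≤ h i := hmid i hi
    by_contra hlt
    push_neg at hlt
    have hieq : h i = T - 1 := by omega
    have hins : insert i (Finset.univ.filter fun j => T ≤ h j)
        ⊆ Finset.univ.filter fun j => T - 1 ≤ h j := by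
      intro j hj
      simp only [Finset.mem_insert, Finset.mem_filter, Finset.mem_univ, true_and] at *
      rcases hj with rfl | hj
      · omega
      · omega
    have hni : i ∉ (Finset.univ.filter fun j => T ≤ h j) := by
      simp only [Finset.mem_filter, Finset.mem_univ, true_and]
      omega
    have hc1 : k + 1 ≤ (Finset.univ.filter fun j => T - 1 ≤ h j).card := by
      have := Finset.card_le_card hins
      rw [Finset.card_insert_of_notMem hni, hcardT] at this
      omega
    have := (kth_ge_iff h (k + 1) (by omega) hk1m (T - 1)).mpr hc1
    omega
  have heq := Finset.eq_of_subset_of_card_le hsub (by omega)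
  exact ⟨heq.symm, hcardT⟩
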